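/- Fix β̂, κ ∈ (0,1) and define ζ : ℝ → ℝ by ζ(x) = (x-1)/(2x-1) for x ≤ 0, ζ(x) = 1 + (log 2 / log(n+1)) x^{β̂} for (n+1)^{-1/(1-κ)} ≤ x < n^{-1/(1-κ)} with n ∈ ℕ, and ζ(x) = (3x+1)/(x+1) for x ≥ 1. Then ζ is strictly increasing and satisfies 1/2 < ζ(x) < 3 for all x ∈ ℝ. -/

import Mathlib

open Real

/-- The function `ζ` defined piecewise by `(x-1)/(2x-1)` for `x ≤ 0`, by
`1 + (log 2 / log (n+1)) x^β̂` on `[(n+1)^{-1/(1-κ)}, n^{-1/(1-κ)})` for `n ∈ ℕ`, `n ≥ 1`,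
and by `(3x+1)/(x+1)` for `x ≥ 1`, is strictly increasing and satisfies `1/2 < ζ < 3`. -/
theorem zeta_strictMono_and_bounds (betaHat κ : ℝ)
    (hbh : 0 < betaHat) (hbh1 : betaHat < 1) (hκ : 0 < κ) (hκ1 : κ < 1)
    (ζ : ℝ → ℝ)
    (h_neg : ∀ x : ℝ, x ≤ 0 → ζ x = (x - 1) / (2 * x - 1))
    (h_mid : ∀ n : ℕ, 1 ≤ n → ∀ x : ℝ,
      ((n : ℝ) + 1) ^ (-(1 / (1 - κ))) ≤ x → x < (n : ℝ) ^ (-(1 / (1 - κ))) →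
      ζ x = 1 + (Real.log 2 / Real.log ((n : ℝ) + 1)) * x ^ betaHat)
    (h_pos : ∀ x : ℝ, 1 ≤ x → ζ x = (3 * x + 1) / (x + 1)) :
    StrictMono ζ ∧ ∀ x : ℝ, 1 / 2 < ζ x ∧ ζ x < 3 := by
  set e : ℝ := -(1 / (1 - κ)) with he
  have hκ' : (0 : ℝ) < 1 - κ := by linarith
  have he_neg : e < 0 := by
    rw [he]
    have : (0:ℝ) < 1 / (1 - κ) := by positivity
    linarith
  -- existence of interval for x ∈ (0,1)
  have exists_n : ∀ x : ℝ, 0 < x → x < 1 → ∃ n : ℕ, 1 ≤ n ∧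
      ((n : ℝ) + 1) ^ e ≤ x ∧ x < (n : ℝ) ^ e := by
    intro x hx0 hx1
    set r : ℝ := x ^ (κ - 1) with hr
    have hr1 : 1 < r := by
      rw [hr]
      exact (Real.one_lt_rpow_iff_of_pos hx0).mpr (Or.inr ⟨hx1, by linarith⟩)
    have hr0 : 0 < r := by linarith
    have hceil : 1 < ⌈r⌉₊ := Nat.lt_ceil.mpr (by exact_mod_cast hr1)
    refine ⟨⌈r⌉₊ - 1, by omega, ?_, ?_⟩
    · have hcast : ((⌈r⌉₊ - 1 : ℕ) : ℝ) + 1 = (⌈r⌉₊ : ℝ) := by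
        have : (⌈r⌉₊ - 1) + 1 = ⌈r⌉₊ := by omega
        exact_mod_cast congrArg (Nat.cast (R := ℝ)) this
      rw [hcast]
      have hle : r ≤ (⌈r⌉₊ : ℝ) := Nat.le_ceil r
      have : ((⌈r⌉₊ : ℝ)) ^ e ≤ r ^ e := Real.rpow_le_rpow_of_nonpos hr0 hle he_neg.le
      have hrx : r ^ e = x := by
        rw [hr, ← Real.rpow_mul hx0.le]
        have : (κ - 1) * e = 1 := by
          rw [he]; field_simp; ring
        rw [this, Real.rpow_one]
      linarith [hrx ▸ this]
    · have hlt : ((⌈r⌉₊ - 1 : ℕ) : ℝ) < r := by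
        have : (⌈r⌉₊ - 1 : ℕ) < ⌈r⌉₊ := by omega
        exact Nat.lt_ceil.mp this
      have hn0 : (0:ℝ) < ((⌈r⌉₊ - 1 : ℕ) : ℝ) := by
        have : (1:ℕ) ≤ ⌈r⌉₊ - 1 := by omega
        exact_mod_cast Nat.lt_of_lt_of_le Nat.zero_lt_one this
      have : r ^ e < ((⌈r⌉₊ - 1 : ℕ) : ℝ) ^ e :=
        Real.rpow_lt_rpow_of_neg hn0 hlt he_neg
      have hrx : r ^ e = x := by
        rw [hr, ← Real.rpow_mul hx0.le]
        have : (κ - 1) * e = 1 := by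
          rw [he]; field_simp; ring
        rw [this, Real.rpow_one]
      linarith [hrx ▸ this]
  -- negative piece facts
  have neg_eq : ∀ x : ℝ, x ≤ 0 → ζ x = (1 - x) / (1 - 2 * x) := by
    intro x hx
    rw [h_neg x hx, ← neg_div_neg_eq]; ring_nf
  have neg_bounds : ∀ x : ℝ, x ≤ 0 → 1 / 2 < ζ x ∧ ζ x ≤ 1 := by
    intro x hx
    rw [neg_eq x hx]
    have h1 : (0:ℝ) < 1 - 2 * x := by linarith
    constructor
    · rw [div_lt_div_iff₀ (by norm_num) h1]; linarith
    · rw [div_le_one h1]; linarith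
  have neg_mono : ∀ x y : ℝ, x < y → y ≤ 0 → ζ x < ζ y := by
    intro x y hxy hy
    rw [neg_eq x (by linarith), neg_eq y hy]
    have h1 : (0:ℝ) < 1 - 2 * x := by linarith
    have h2 : (0:ℝ) < 1 - 2 * y := by linarith
    rw [div_lt_div_iff₀ h1 h2]; nlinarith
  -- positive piece facts
  have pos_bounds : ∀ x : ℝ, 1 ≤ x → 2 ≤ ζ x ∧ ζ x < 3 := by
    intro x hx
    rw [h_pos x hx]
    have h1 : (0:ℝ) < x + 1 := by linarith
    constructor
    · rw [le_div_iff₀ h1]; linarith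
    · rw [div_lt_iff₀ h1]; linarith
  have pos_mono : ∀ x y : ℝ, x < y → 1 ≤ x → ζ x < ζ y := by
    intro x y hxy hx
    rw [h_pos x hx, h_pos y (by linarith)]
    have h1 : (0:ℝ) < x + 1 := by linarith
    have h2 : (0:ℝ) < y + 1 := by linarith
    rw [div_lt_div_iff₀ h1 h2]; nlinarith
  -- middle piece facts
  have mid_bounds : ∀ x : ℝ, 0 < x → x < 1 → 1 < ζ x ∧ ζ x < 2 := by
    intro x hx0 hx1
    obtain ⟨n, hn1, hxl, hxu⟩ := exists_n x hx0 hx1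
    rw [h_mid n hn1 x hxl hxu]
    have hn1' : (1:ℝ) ≤ (n:ℝ) := by exact_mod_cast hn1
    have hlogn : 0 < Real.log ((n:ℝ) + 1) := Real.log_pos (by linarith)
    have hlog2 : 0 < Real.log 2 := Real.log_pos one_lt_two
    have hc : 0 < Real.log 2 / Real.log ((n:ℝ) + 1) := div_pos hlog2 hlogn
    have hc1 : Real.log 2 / Real.log ((n:ℝ) + 1) ≤ 1 := by
      rw [div_le_one hlogn]
      exact Real.log_le_log (by norm_num) (by linarith)
    have hp : 0 < x ^ betaHat := Real.rpow_pos_of_pos hx0 betaHat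
    have hp1 : x ^ betaHat < 1 := Real.rpow_lt_one hx0.le hx1 hbh
    constructor
    · nlinarith
    · nlinarith
  have mid_mono : ∀ x y : ℝ, x < y → 0 < x → y < 1 → ζ x < ζ y := by
    intro x y hxy hx0 hy1
    have hx1 : x < 1 := lt_trans hxy hy1
    have hy0 : 0 < y := lt_trans hx0 hxy
    obtain ⟨n, hn1, hxl, hxu⟩ := exists_n x hx0 hx1
    obtain ⟨m, hm1, hyl, hyu⟩ := exists_n y hy0 hy1
    rw [h_mid n hn1 x hxl hxu, h_mid m hm1 y hyl hyu]
    have hmn : m ≤ n := by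
      by_contra h
      push_neg at h
      have h' : (n:ℝ) + 1 ≤ (m:ℝ) := by exact_mod_cast h
      have hn0 : (0:ℝ) < (n:ℝ) + 1 := by positivity
      have : (m:ℝ) ^ e ≤ ((n:ℝ) + 1) ^ e :=
        Real.rpow_le_rpow_of_nonpos hn0 h' he_neg.le
      linarith
    have hn1' : (1:ℝ) ≤ (n:ℝ) := by exact_mod_cast hn1
    have hm1' : (1:ℝ) ≤ (m:ℝ) := by exact_mod_cast hm1
    have hmn' : (m:ℝ) ≤ (n:ℝ) := by exact_mod_cast hmn
    have hlogn : 0 < Real.log ((n:ℝ) + 1) := Real.log_pos (by linarith)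
    have hlogm : 0 < Real.log ((m:ℝ) + 1) := Real.log_pos (by linarith)
    have hlog2 : 0 < Real.log 2 := Real.log_pos one_lt_two
    have hloglog : Real.log ((m:ℝ) + 1) ≤ Real.log ((n:ℝ) + 1) :=
      Real.log_le_log (by linarith) (by linarith)
    have hcle : Real.log 2 / Real.log ((n:ℝ) + 1) ≤ Real.log 2 / Real.log ((m:ℝ) + 1) :=
      div_le_div_of_nonneg_left hlog2.le hlogm hloglog
    have hcn : 0 < Real.log 2 / Real.log ((n:ℝ) + 1) := div_pos hlog2 hlogn
    have hpx : 0 < x ^ betaHat := Real.rpow_pos_of_pos hx0 betaHat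
    have hpy : 0 < y ^ betaHat := Real.rpow_pos_of_pos hy0 betaHat
    have hplt : x ^ betaHat < y ^ betaHat := Real.rpow_lt_rpow hx0.le hxy hbh
    nlinarith
  constructor
  · intro x y hxy
    rcases le_or_gt x 0 with hx0 | hx0
    · rcases le_or_gt y 0 with hy0 | hy0
      · exact neg_mono x y hxy hy0
      · rcases lt_or_ge y 1 with hy1 | hy1
        · exact lt_of_le_of_lt (neg_bounds x hx0).2 (mid_bounds y hy0 hy1).1
        · have := (neg_bounds x hx0).2
          have := (pos_bounds y hy1).1
          linarith
    · rcases lt_or_ge x 1 with hx1 | hx1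
      · rcases lt_or_ge y 1 with hy1 | hy1
        · exact mid_mono x y hxy hx0 hy1
        · exact lt_of_lt_of_le (mid_bounds x hx0 hx1).2 (pos_bounds y hy1).1
      · exact pos_mono x y hxy hx1
  · intro x
    rcases le_or_gt x 0 with hx0 | hx0
    · exact ⟨(neg_bounds x hx0).1, by linarith [(neg_bounds x hx0).2]⟩
    · rcases lt_or_ge x 1 with hx1 | hx1
      · exact ⟨by linarith [(mid_bounds x hx0 hx1).1], by linarith [(mid_bounds x hx0 hx1).2]⟩
      · exact ⟨by linarith [(pos_bounds x hx1).1], (pos_bounds x hx1).2⟩
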